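/- arXiv:chao-dyn/9705010 — 2 statements merged into one kernel-verified Lean document; each statement's English description precedes it below -/
import Mathlib

section
/- The origin is an asymptotically stable equilibrium of the system ẋ = x y + x³, ẏ = −y − 2x²: there exists δ > 0 such that every solution with ‖(x(0), y(0))‖ < δ exists for all t ≥ 0 and satisfies (x(t), y(t)) → (0, 0) as t → ∞. -/
open Filter Set Metric
open scoped NNReal

noncomputable section CentreAux

/-- clamp to `[-1,1]` -/
def cmcl (a : ℝ) : ℝ := max (min 1 a) (-1)

lemma cmcl_abs_le (a : ℝ) : |cmcl a| ≤ 1 := by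
  rw [abs_le]; constructor
  · exact le_max_right _ _
  · exact max_le (min_le_left _ _) (by norm_num)

lemma cmcl_eq (a : ℝ) (h : |a| ≤ 1) : cmcl a = a := by
  rw [abs_le] at h
  unfold cmcl
  rw [min_eq_right h.2, max_eq_left h.1]

lemma cmcl_lip (a b : ℝ) : |cmcl a - cmcl b| ≤ |a - b| := by
  calc |cmcl a - cmcl b| ≤ |min 1 a - min 1 b| := abs_max_sub_max_le_abs _ _ _
    _ ≤ max |(1:ℝ) - 1| |a - b| := abs_min_sub_min_le_max 1 a 1 b
    _ ≤ |a - b| := by simp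

/-- the vector field of the system -/
def cmfld (p : ℝ × ℝ) : ℝ × ℝ := (p.1 * p.2 + p.1 ^ 3, -p.2 - 2 * p.1 ^ 2)

/-- the cut-off vector field -/
def cmF (p : ℝ × ℝ) : ℝ × ℝ := cmfld (cmcl p.1, cmcl p.2)

lemma cmF_eq (p : ℝ × ℝ) (h1 : |p.1| ≤ 1) (h2 : |p.2| ≤ 1) : cmF p = cmfld p := by
  unfold cmF
  rw [cmcl_eq _ h1, cmcl_eq _ h2]

lemma cmaux1 {a b c d : ℝ} (ha : |a| ≤ 1) (hb : |b| ≤ 1) (hc : |c| ≤ 1) (hd : |d| ≤ 1) :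
    |a * b + a ^ 3 - (c * d + c ^ 3)| ≤ 4 * |a - c| + |b - d| := by
  have e : a * b + a ^ 3 - (c * d + c ^ 3)
      = a * (b - d) + d * (a - c) + (a - c) * (a ^ 2 + a * c + c ^ 2) := by ring
  rw [e]
  have h1 : |a * (b - d)| ≤ |b - d| := by
    rw [abs_mul]; exact mul_le_of_le_one_left (abs_nonneg _) ha
  have h2 : |d * (a - c)| ≤ |a - c| := by
    rw [abs_mul]; exact mul_le_of_le_one_left (abs_nonneg _) hd
  have h3 : |(a - c) * (a ^ 2 + a * c + c ^ 2)| ≤ |a - c| * 3 := by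
    rw [abs_mul]
    apply mul_le_mul_of_nonneg_left _ (abs_nonneg _)
    rw [abs_le] at ha hc ⊢
    constructor <;> nlinarith [ha.1, ha.2, hc.1, hc.2, sq_nonneg (a + c), sq_nonneg (a - c)]
  calc |a * (b - d) + d * (a - c) + (a - c) * (a ^ 2 + a * c + c ^ 2)|
      ≤ |a * (b - d) + d * (a - c)| + |(a - c) * (a ^ 2 + a * c + c ^ 2)| := abs_add_le _ _
    _ ≤ (|a * (b - d)| + |d * (a - c)|) + |(a - c) * (a ^ 2 + a * c + c ^ 2)| := by
        gcongr; exact abs_add_le _ _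
    _ ≤ 4 * |a - c| + |b - d| := by linarith

lemma cmaux2 {a b c d : ℝ} (ha : |a| ≤ 1) (hc : |c| ≤ 1) :
    |(-b - 2 * a ^ 2) - (-d - 2 * c ^ 2)| ≤ 4 * |a - c| + |b - d| := by
  have e : (-b - 2 * a ^ 2) - (-d - 2 * c ^ 2) = (d - b) + (c - a) * (2 * (a + c)) := by ring
  rw [e]
  have h2 : |(c - a) * (2 * (a + c))| ≤ |a - c| * 4 := by
    rw [abs_mul, abs_sub_comm c a]
    apply mul_le_mul_of_nonneg_left _ (abs_nonneg _)
    rw [abs_le] at ha hc ⊢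
    constructor <;> nlinarith [ha.1, ha.2, hc.1, hc.2]
  calc |(d - b) + (c - a) * (2 * (a + c))| ≤ |d - b| + |(c - a) * (2 * (a + c))| := abs_add_le _ _
    _ ≤ 4 * |a - c| + |b - d| := by rw [abs_sub_comm d b]; linarith

lemma cmF_lip : LipschitzWith 9 cmF := by
  apply LipschitzWith.of_dist_le_mul
  intro p q
  have key : dist (cmF p) (cmF q) ≤ 9 * dist p q := by
    rw [Prod.dist_eq, Prod.dist_eq]
    set a := cmcl p.1; set b := cmcl p.2; set c := cmcl q.1; set d := cmcl q.2
    have h1 : |a - c| ≤ max (dist p.1 q.1) (dist p.2 q.2) :=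
      le_trans (le_trans (cmcl_lip _ _) (le_of_eq (Real.dist_eq p.1 q.1).symm)) (le_max_left _ _)
    have h2 : |b - d| ≤ max (dist p.1 q.1) (dist p.2 q.2) :=
      le_trans (le_trans (cmcl_lip _ _) (le_of_eq (Real.dist_eq p.2 q.2).symm)) (le_max_right _ _)
    have hM : (0:ℝ) ≤ max (dist p.1 q.1) (dist p.2 q.2) := le_trans (abs_nonneg _) h1
    apply max_le
    · rw [Real.dist_eq]
      calc |(cmF p).1 - (cmF q).1| = |a * b + a ^ 3 - (c * d + c ^ 3)| := rfl
        _ ≤ 4 * |a - c| + |b - d| :=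
            cmaux1 (cmcl_abs_le _) (cmcl_abs_le _) (cmcl_abs_le _) (cmcl_abs_le _)
        _ ≤ 9 * max (dist p.1 q.1) (dist p.2 q.2) := by linarith
    · rw [Real.dist_eq]
      calc |(cmF p).2 - (cmF q).2| = |(-b - 2 * a ^ 2) - (-d - 2 * c ^ 2)| := rfl
        _ ≤ 4 * |a - c| + |b - d| := cmaux2 (cmcl_abs_le _) (cmcl_abs_le _)
        _ ≤ 9 * max (dist p.1 q.1) (dist p.2 q.2) := by linarith
  have h9 : ((9:ℝ≥0):ℝ) = 9 := by norm_num
  rw [h9]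
  exact key

lemma cmF_bound (p : ℝ × ℝ) : ‖cmF p‖ ≤ 4 := by
  have ha := cmcl_abs_le p.1; have hb := cmcl_abs_le p.2
  have k1 : |cmcl p.1 * cmcl p.2| ≤ 1 := by
    rw [abs_mul]
    exact mul_le_one₀ ha (abs_nonneg _) hb
  have k2 : |cmcl p.1 ^ 3| ≤ 1 := by
    rw [abs_pow]
    exact pow_le_one₀ (abs_nonneg _) ha
  have k3 : |cmcl p.1 ^ 2| ≤ 1 := by
    rw [abs_pow]
    exact pow_le_one₀ (abs_nonneg _) ha
  rw [Prod.norm_def]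
  apply max_le
  · show |cmcl p.1 * cmcl p.2 + cmcl p.1 ^ 3| ≤ (4:ℝ)
    calc |cmcl p.1 * cmcl p.2 + cmcl p.1 ^ 3| ≤ |cmcl p.1 * cmcl p.2| + |cmcl p.1 ^ 3| := abs_add_le _ _
      _ ≤ 4 := by linarith
  · show |-cmcl p.2 - 2 * cmcl p.1 ^ 2| ≤ (4:ℝ)
    have e : -cmcl p.2 - 2 * cmcl p.1 ^ 2 = -(cmcl p.2 + 2 * cmcl p.1 ^ 2) := by ring
    rw [e, abs_neg]
    calc |cmcl p.2 + 2 * cmcl p.1 ^ 2| ≤ |cmcl p.2| + |2 * cmcl p.1 ^ 2| := abs_add_le _ _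
      _ ≤ 4 := by rw [abs_mul]; rw [abs_two]; linarith

end CentreAux


lemma cmF_exists_on (p₀ : ℝ × ℝ) (n : ℕ) :
    ∃ f : ℝ → ℝ × ℝ, f 0 = p₀ ∧ ∀ t ∈ Ioo (-(n+1:ℝ)) (n+1), HasDerivAt f (cmF (f t)) t := by
  have hn : (0:ℝ) ≤ n := Nat.cast_nonneg n
  have hpl : IsPicardLindelof (fun _ => cmF)
      (⟨0, Set.mem_Icc.mpr ⟨by linarith, by linarith⟩⟩ : Icc (-(n+1:ℝ)) (n+1)) p₀
      ⟨4*(n+1), by positivity⟩ 0 4 9 :=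
    { lipschitzOnWith := fun t _ => cmF_lip.lipschitzOnWith
      continuousOn := fun x _ => continuousOn_const
      norm_le := fun t _ x _ => cmF_bound x
      mul_max_le := by
        simp only [NNReal.coe_mk, NNReal.coe_zero, NNReal.coe_ofNat, sub_zero, zero_sub, neg_neg,
          max_self]
        exact le_refl _ }
  obtain ⟨f, hf0, hf⟩ := hpl.exists_eq_forall_mem_Icc_hasDerivWithinAt₀
  exact ⟨f, hf0, fun t ht => (hf t (Ioo_subset_Icc_self ht)).hasDerivAt (Icc_mem_nhds ht.1 ht.2)⟩

lemma cmF_self_mem (s : ℝ) : s ∈ Ioo (-(⌈|s|⌉₊+1:ℝ)) (⌈|s|⌉₊+1) := by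
  have h1 : |s| ≤ (⌈|s|⌉₊ : ℝ) := Nat.le_ceil _
  have h2 := abs_le.1 h1
  exact ⟨by linarith [h2.1], by linarith [h2.2]⟩

lemma cmF_global (p₀ : ℝ × ℝ) :
    ∃ X : ℝ → ℝ × ℝ, X 0 = p₀ ∧ ∀ t, HasDerivAt X (cmF (X t)) t := by
  choose f hf0 hf using fun n => cmF_exists_on p₀ n
  have key : ∀ m n : ℕ, ∀ t : ℝ, t ∈ Ioo (-(m+1:ℝ)) (m+1) → t ∈ Ioo (-(n+1:ℝ)) (n+1) →
      f m t = f n t := by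
    intro m n t htm htn
    have hsub_m : Ioo (max (-(m+1:ℝ)) (-(n+1))) (min ((m+1:ℝ)) (n+1)) ⊆ Ioo (-(m+1:ℝ)) (m+1) :=
      Ioo_subset_Ioo (le_max_left _ _) (min_le_left _ _)
    have hsub_n : Ioo (max (-(m+1:ℝ)) (-(n+1))) (min ((m+1:ℝ)) (n+1)) ⊆ Ioo (-(n+1:ℝ)) (n+1) :=
      Ioo_subset_Ioo (le_max_right _ _) (min_le_right _ _)
    have hm : (0:ℝ) ≤ m := Nat.cast_nonneg m
    have hn : (0:ℝ) ≤ n := Nat.cast_nonneg n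
    have h0 : (0:ℝ) ∈ Ioo (max (-(m+1:ℝ)) (-(n+1))) (min ((m+1:ℝ)) (n+1)) :=
      ⟨by apply max_lt <;> linarith, by apply lt_min <;> linarith⟩
    have huniq := ODE_solution_unique_of_mem_Ioo
      (v := fun _ => cmF) (s := fun _ => univ) (K := 9)
      (fun _ _ => cmF_lip.lipschitzOnWith) h0
      (fun s hs => ⟨hf m s (hsub_m hs), trivial⟩)
      (fun s hs => ⟨hf n s (hsub_n hs), trivial⟩)
      ((hf0 m).trans (hf0 n).symm)
    exact huniq ⟨max_lt htm.1 htn.1, lt_min htm.2 htn.2⟩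
  refine ⟨fun t => f ⌈|t|⌉₊ t, ?_, ?_⟩
  · show f ⌈|(0:ℝ)|⌉₊ 0 = p₀
    norm_num
    exact hf0 0
  · intro t
    have htn := cmF_self_mem t
    have hd := hf ⌈|t|⌉₊ t htn
    have heq : (fun s => f ⌈|s|⌉₊ s) =ᶠ[nhds t] f ⌈|t|⌉₊ := by
      filter_upwards [Ioo_mem_nhds htn.1 htn.2] with s hs
      exact key ⌈|s|⌉₊ ⌈|t|⌉₊ s (cmF_self_mem s) hs
    exact hd.congr_of_eventuallyEq heq


noncomputable section

/-- `z = y + 2x²` along a trajectory -/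
def cmz (x y : ℝ → ℝ) (t : ℝ) : ℝ := y t + 2 * (x t) ^ 2

/-- Lyapunov function `V = (x² + z²)/2` along a trajectory -/
def cmV (x y : ℝ → ℝ) (t : ℝ) : ℝ := ((x t) ^ 2 + (cmz x y t) ^ 2) / 2

/-- the derivative of `V` along trajectories -/
def cmVd (x y : ℝ → ℝ) (t : ℝ) : ℝ :=
  x t * (x t * y t + x t ^ 3) +
    cmz x y t * ((-(y t) - 2 * x t ^ 2) + 2 * (2 * x t * (x t * y t + x t ^ 3)))

lemma hasDerivAt_cmV {x y : ℝ → ℝ} {t : ℝ}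
    (hx : HasDerivAt x (x t * y t + x t ^ 3) t)
    (hy : HasDerivAt y (-(y t) - 2 * x t ^ 2) t) :
    HasDerivAt (cmV x y) (cmVd x y t) t := by
  have hz : HasDerivAt (cmz x y)
      ((-(y t) - 2 * x t ^ 2) + 2 * (2 * x t * (x t * y t + x t ^ 3))) t := by
    have h2 : HasDerivAt (fun s => 2 * (x s) ^ 2) (2 * (2 * x t * (x t * y t + x t ^ 3))) t := by
      have := (hx.fun_pow 2).const_mul (2:ℝ)
      exact this.congr_deriv (by norm_num <;> ring)
    exact hy.add h2
  have hV : HasDerivAt (fun s => ((x s) ^ 2 + (cmz x y s) ^ 2) / 2)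
      ((2 * x t ^ 1 * (x t * y t + x t ^ 3) +
        2 * cmz x y t ^ 1 * ((-(y t) - 2 * x t ^ 2) + 2 * (2 * x t * (x t * y t + x t ^ 3)))) / 2) t :=
    ((hx.fun_pow 2).add (hz.fun_pow 2)).div_const 2
  exact hV.congr_deriv (by simp only [cmVd, pow_one]; ring)

lemma cmkey {X Z : ℝ} (hX : X ^ 2 ≤ 1/100) (hZ : Z ^ 2 ≤ 1/100) :
    X * (X * (Z - 2 * X ^ 2) + X ^ 3) +
      Z * ((-(Z - 2 * X ^ 2) - 2 * X ^ 2) + 2 * (2 * X * (X * (Z - 2 * X ^ 2) + X ^ 3)))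
      ≤ -(1/20) * (X ^ 4 + Z ^ 2) := by
  have hZ1 : Z ≤ 1/10 := by nlinarith
  have hZ2 : -(1/10) ≤ Z := by nlinarith
  nlinarith [sq_nonneg (X ^ 2 - Z),
    mul_nonneg (sq_nonneg Z) (by linarith : (0:ℝ) ≤ 1/100 - X ^ 2),
    mul_nonneg (sq_nonneg (X ^ 2)) (by linarith : (0:ℝ) ≤ 1/10 + Z)]

lemma cmVd_le {x y : ℝ → ℝ} {t : ℝ} (hx2 : (x t) ^ 2 ≤ 1/100) (hz2 : (cmz x y t) ^ 2 ≤ 1/100) :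
    cmVd x y t ≤ -(1/20) * ((x t) ^ 4 + (cmz x y t) ^ 2) := by
  have := cmkey hx2 hz2
  have he : y t = cmz x y t - 2 * (x t) ^ 2 := by simp [cmz]
  calc cmVd x y t = x t * (x t * (cmz x y t - 2 * x t ^ 2) + x t ^ 3) +
      cmz x y t * ((-(cmz x y t - 2 * x t ^ 2) - 2 * x t ^ 2) +
        2 * (2 * x t * (x t * (cmz x y t - 2 * x t ^ 2) + x t ^ 3))) := by
        simp only [cmVd]; rw [he]
    _ ≤ -(1/20) * ((x t) ^ 4 + (cmz x y t) ^ 2) := this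

lemma cm_sq_bounds {x y : ℝ → ℝ} {t : ℝ} (h : cmV x y t ≤ 1/200) :
    (x t) ^ 2 ≤ 1/100 ∧ (cmz x y t) ^ 2 ≤ 1/100 := by
  simp only [cmV] at h
  constructor <;> nlinarith [sq_nonneg (x t), sq_nonneg (cmz x y t)]

/-- Bootstrap: continuous function with nonpositive derivative while below `b` stays below `b`. -/
lemma cmboot {V : ℝ → ℝ} {b : ℝ} (h0 : V 0 < b)
    (hcont : ∀ t, 0 ≤ t → ContinuousAt V t)
    (hder : ∀ t, 0 ≤ t → V t < b → ∃ d, HasDerivAt V d t ∧ d ≤ 0) :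
    ∀ t, 0 ≤ t → V t < b := by
  by_contra hcon
  push_neg at hcon
  obtain ⟨t₁, ht₁0, ht₁⟩ := hcon
  have hAne : ({t : ℝ | 0 ≤ t ∧ b ≤ V t}).Nonempty := ⟨t₁, ht₁0, ht₁⟩
  have hAbd : BddBelow {t : ℝ | 0 ≤ t ∧ b ≤ V t} := ⟨0, fun t ht => ht.1⟩
  have hAcl : IsClosed {t : ℝ | 0 ≤ t ∧ b ≤ V t} := by
    have hVc : ContinuousOn V (Ici 0) := fun t ht => (hcont t ht).continuousWithinAt
    have he : {t : ℝ | 0 ≤ t ∧ b ≤ V t} = Ici 0 ∩ V ⁻¹' (Ici b) := by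
      ext t; simp [mem_Ici, and_comm]
    rw [he]
    exact hVc.preimage_isClosed_of_isClosed isClosed_Ici isClosed_Ici
  set T := sInf {t : ℝ | 0 ≤ t ∧ b ≤ V t} with hTdef
  have hTA : T ∈ {t : ℝ | 0 ≤ t ∧ b ≤ V t} := hAcl.csInf_mem hAne hAbd
  have hless : ∀ s, 0 ≤ s → s < T → V s < b := by
    intro s hs0 hsT
    by_contra h
    push_neg at h
    exact absurd (csInf_le hAbd ⟨hs0, h⟩) (not_le.2 hsT)
  have hanti : AntitoneOn V (Icc 0 T) := by
    apply antitoneOn_of_deriv_nonpos (convex_Icc 0 T)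
    · exact fun s hs => (hcont s hs.1).continuousWithinAt
    · intro s hs
      rw [interior_Icc] at hs
      obtain ⟨d, hd, _⟩ := hder s hs.1.le (hless s hs.1.le hs.2)
      exact hd.differentiableAt.differentiableWithinAt
    · intro s hs
      rw [interior_Icc] at hs
      obtain ⟨d, hd, hdle⟩ := hder s hs.1.le (hless s hs.1.le hs.2)
      rw [hd.deriv]; exact hdle
  have := hanti (left_mem_Icc.2 hTA.1) (right_mem_Icc.2 hTA.1) hTA.1
  linarith [hTA.2]

/-- antitone on `[0,∞)` from nonpositive derivative -/
lemma cmantiIci {V : ℝ → ℝ} (hcont : ∀ t, 0 ≤ t → ContinuousAt V t)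
    (hder : ∀ t, 0 < t → ∃ d, HasDerivAt V d t ∧ d ≤ 0) : AntitoneOn V (Ici 0) := by
  apply antitoneOn_of_deriv_nonpos (convex_Ici 0)
  · exact fun s hs => (hcont s hs).continuousWithinAt
  · intro s hs
    rw [interior_Ici] at hs
    obtain ⟨d, hd, _⟩ := hder s hs
    exact hd.differentiableAt.differentiableWithinAt
  · intro s hs
    rw [interior_Ici] at hs
    obtain ⟨d, hd, hdle⟩ := hder s hs
    rw [hd.deriv]; exact hdle

lemma cmmaster {x y : ℝ → ℝ}
    (hx : ∀ t, 0 ≤ t → HasDerivAt x (x t * y t + x t ^ 3) t)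
    (hy : ∀ t, 0 ≤ t → HasDerivAt y (-(y t) - 2 * x t ^ 2) t)
    (h0 : cmV x y 0 < 1/200) :
    Tendsto (fun t => (x t, y t)) atTop (nhds ((0:ℝ), (0:ℝ))) := by
  have hVder : ∀ t, 0 ≤ t → HasDerivAt (cmV x y) (cmVd x y t) t :=
    fun t ht => hasDerivAt_cmV (hx t ht) (hy t ht)
  have hcont : ∀ t, 0 ≤ t → ContinuousAt (cmV x y) t := fun t ht => (hVder t ht).continuousAt
  have hVpos : ∀ t, 0 ≤ cmV x y t := by
    intro t; simp only [cmV]; positivity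
  have hder0 : ∀ t, 0 ≤ t → cmV x y t < 1/200 → ∃ d, HasDerivAt (cmV x y) d t ∧ d ≤ 0 := by
    intro t ht hV
    obtain ⟨h1, h2⟩ := cm_sq_bounds hV.le
    refine ⟨cmVd x y t, hVder t ht, le_trans (cmVd_le h1 h2) ?_⟩
    nlinarith [pow_le_pow_left₀ (sq_nonneg (x t)) h1 2, sq_nonneg (cmz x y t), sq_nonneg ((x t)^2)]
  have hinv : ∀ t, 0 ≤ t → cmV x y t < 1/200 := cmboot h0 hcont hder0
  have hanti : AntitoneOn (cmV x y) (Ici 0) :=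
    cmantiIci hcont (fun t ht => hder0 t ht.le (hinv t ht.le))
  have hsmall : ∀ ε, 0 < ε → ∃ T, 0 ≤ T ∧ cmV x y T < ε := by
    intro ε hε
    by_contra h
    push_neg at h
    have hεb : ε < 1/200 := lt_of_le_of_lt (h 0 le_rfl) h0
    have hm : (0:ℝ) < (1/20) * ε ^ 2 := by positivity
    have hd2 : ∀ t, 0 < t →
        ∃ d, HasDerivAt (fun s => cmV x y s + ((1/20) * ε ^ 2) * s) d t ∧ d ≤ 0 := by
      intro t ht
      refine ⟨cmVd x y t + (1/20) * ε ^ 2,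
        (hVder t ht.le).add (by simpa using (hasDerivAt_id t).const_mul ((1/20) * ε ^ 2)), ?_⟩
      have hVt := hinv t ht.le
      have hVε := h t ht.le
      obtain ⟨h1, h2⟩ := cm_sq_bounds hVt.le
      have hsum : 2 * ε ≤ (x t) ^ 2 + (cmz x y t) ^ 2 := by
        simp only [cmV] at hVε; linarith
      have hXZ : ε ^ 2 ≤ (x t) ^ 4 + (cmz x y t) ^ 2 := by
        rcases le_or_gt ε ((x t) ^ 2) with hc | hc
        · nlinarith [sq_nonneg (cmz x y t)]
        · nlinarith [sq_nonneg (x t), sq_nonneg ((x t)^2)]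
      have := cmVd_le h1 h2
      nlinarith
    have hanti2 := cmantiIci
      (fun t ht => ((hVder t ht).add
        (by simpa using (hasDerivAt_id t).const_mul ((1/20) * ε ^ 2))).continuousAt) hd2
    have hT : (0:ℝ) ≤ (cmV x y 0 + 1) / ((1/20) * ε ^ 2) :=
      div_nonneg (by linarith [hVpos 0]) hm.le
    have hb := hanti2 self_mem_Ici (mem_Ici.2 hT) hT
    have hmT : ((1/20) * ε ^ 2) * ((cmV x y 0 + 1) / ((1/20) * ε ^ 2)) = cmV x y 0 + 1 := by
      field_simp
    simp only [Pi.add_apply, mul_zero, add_zero] at hb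
    rw [hmT] at hb
    linarith [hVpos ((cmV x y 0 + 1) / ((1/20) * ε ^ 2))]
  have hVto : Tendsto (cmV x y) atTop (nhds 0) := by
    rw [tendsto_order]
    constructor
    · intro a ha
      filter_upwards [eventually_ge_atTop (0:ℝ)] with t ht
      exact lt_of_lt_of_le ha (hVpos t)
    · intro a ha
      obtain ⟨T, hT0, hTa⟩ := hsmall a ha
      filter_upwards [eventually_ge_atTop T] with t ht
      exact lt_of_le_of_lt (hanti hT0 (le_trans hT0 ht) ht) hTa
  have hx2 : Tendsto (fun t => (x t) ^ 2) atTop (nhds 0) := by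
    apply squeeze_zero (fun t => sq_nonneg _) (fun t => ?_) (by simpa using hVto.const_mul 2)
    simp only [cmV]
    nlinarith [sq_nonneg (cmz x y t)]
  have hz2 : Tendsto (fun t => (cmz x y t) ^ 2) atTop (nhds 0) := by
    apply squeeze_zero (fun t => sq_nonneg _) (fun t => ?_) (by simpa using hVto.const_mul 2)
    simp only [cmV]
    nlinarith [sq_nonneg (x t)]
  have habs : ∀ {f : ℝ → ℝ}, Tendsto (fun t => (f t) ^ 2) atTop (nhds 0) →
      Tendsto f atTop (nhds 0) := by
    intro f hf
    rw [tendsto_zero_iff_abs_tendsto_zero]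
    have := (Real.continuous_sqrt.tendsto 0).comp hf
    simpa [Function.comp_def, Real.sqrt_sq_eq_abs] using this
  have hxto : Tendsto x atTop (nhds 0) := habs hx2
  have hzto : Tendsto (cmz x y) atTop (nhds 0) := habs hz2
  have hyto : Tendsto y atTop (nhds 0) := by
    have := hzto.sub (hx2.const_mul 2)
    simp only [cmz] at this
    simpa using this
  exact hxto.prodMk_nhds hyto

end

lemma cmbox {x y : ℝ → ℝ} {t : ℝ} (h1 : (x t) ^ 2 ≤ 1/100) (h2 : (cmz x y t) ^ 2 ≤ 1/100) :
    |x t| ≤ 1 ∧ |y t| ≤ 1 := by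
  have he : y t = cmz x y t - 2 * (x t) ^ 2 := by simp [cmz]
  constructor <;> rw [abs_le] <;> constructor <;> nlinarith [sq_nonneg (x t), sq_nonneg (cmz x y t)]

lemma cmV0small {a c : ℝ} (ha : |a| < 1/30) (hc : |c| < 1/30) :
    (a ^ 2 + (c + 2 * a ^ 2) ^ 2) / 2 < 1/200 := by
  rw [abs_lt] at ha hc
  nlinarith [sq_nonneg a, sq_nonneg c, sq_nonneg (a*c), sq_nonneg (a^2),
    mul_pos (by linarith : (0:ℝ) < 1/30 - a) (by linarith : (0:ℝ) < 1/30 + a),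
    mul_pos (by linarith : (0:ℝ) < 1/30 - c) (by linarith : (0:ℝ) < 1/30 + c)]

/-- The origin is an asymptotically stable equilibrium of `ẋ = xy + x³`,
`ẏ = −y − 2x²`: there is a `δ > 0` such that every solution with
`‖(x 0, y 0)‖ < δ` exists for all `t ≥ 0` and tends to `(0, 0)` as `t → ∞`. -/
theorem origin_asymptotically_stable_via_centre_manifold :
    ∃ δ > (0 : ℝ),
      (∀ x₀ y₀ : ℝ, ‖((x₀, y₀) : ℝ × ℝ)‖ < δ →
        ∃ x y : ℝ → ℝ, x 0 = x₀ ∧ y 0 = y₀ ∧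
          (∀ t : ℝ, 0 ≤ t →
            HasDerivAt x (x t * y t + (x t) ^ 3) t ∧
            HasDerivAt y (-(y t) - 2 * (x t) ^ 2) t)) ∧
      (∀ x y : ℝ → ℝ,
        (∀ t : ℝ, 0 ≤ t → HasDerivAt x (x t * y t + (x t) ^ 3) t) →
        (∀ t : ℝ, 0 ≤ t → HasDerivAt y (-(y t) - 2 * (x t) ^ 2) t) →
        ‖((x 0, y 0) : ℝ × ℝ)‖ < δ →
        Tendsto (fun t => (x t, y t)) atTop (nhds ((0 : ℝ), (0 : ℝ)))) := by
  refine ⟨1/30, by norm_num, ?_, ?_⟩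
  · intro x₀ y₀ hnorm
    obtain ⟨X, hX0, hXd⟩ := cmF_global (x₀, y₀)
    set x : ℝ → ℝ := fun t => (X t).1 with hxdef
    set y : ℝ → ℝ := fun t => (X t).2 with hydef
    have hx0 : x 0 = x₀ := by rw [hxdef]; simp [hX0]
    have hy0 : y 0 = y₀ := by rw [hydef]; simp [hX0]
    have hdx : ∀ t, HasDerivAt x ((cmF (X t)).1) t := by
      intro t
      have h := ((hXd t).hasFDerivAt.fst).hasDerivAt
      simpa using h
    have hdy : ∀ t, HasDerivAt y ((cmF (X t)).2) t := by
      intro t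
      have h := ((hXd t).hasFDerivAt.snd).hasDerivAt
      simpa using h
    have ha : |x₀| < 1/30 := by
      have := norm_fst_le ((x₀, y₀) : ℝ × ℝ)
      simp only [Real.norm_eq_abs] at this
      exact lt_of_le_of_lt this hnorm
    have hc : |y₀| < 1/30 := by
      have := norm_snd_le ((x₀, y₀) : ℝ × ℝ)
      simp only [Real.norm_eq_abs] at this
      exact lt_of_le_of_lt this hnorm
    have h0 : cmV x y 0 < 1/200 := by
      simp only [cmV, cmz, hx0, hy0]
      exact cmV0small ha hc
    -- conversion: while in the box, the cut-off field agrees with the true field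
    have hconv : ∀ t, (x t) ^ 2 ≤ 1/100 → (cmz x y t) ^ 2 ≤ 1/100 →
        HasDerivAt x (x t * y t + (x t) ^ 3) t ∧ HasDerivAt y (-(y t) - 2 * (x t) ^ 2) t := by
      intro t h1 h2
      obtain ⟨hbx, hby⟩ := cmbox h1 h2
      have hFeq : cmF (X t) = cmfld (X t) := cmF_eq _ hbx hby
      constructor
      · have := hdx t; rw [hFeq] at this; exact this
      · have := hdy t; rw [hFeq] at this; exact this
    have hinv : ∀ t, 0 ≤ t → cmV x y t < 1/200 := by
      apply cmboot h0
      · intro t _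
        have cx := (hdx t).continuousAt
        have cy := (hdy t).continuousAt
        show ContinuousAt (fun s => ((x s) ^ 2 + (y s + 2 * (x s) ^ 2) ^ 2) / 2) t
        exact (((cx.pow 2).add ((cy.add ((cx.pow 2).const_mul 2)).pow 2)).div_const 2)
      · intro t ht hV
        obtain ⟨h1, h2⟩ := cm_sq_bounds hV.le
        obtain ⟨hdx', hdy'⟩ := hconv t h1 h2
        refine ⟨cmVd x y t, hasDerivAt_cmV hdx' hdy', le_trans (cmVd_le h1 h2) ?_⟩
        nlinarith [sq_nonneg ((x t) ^ 2), sq_nonneg (cmz x y t)]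
    refine ⟨x, y, hx0, hy0, fun t ht => ?_⟩
    obtain ⟨h1, h2⟩ := cm_sq_bounds (hinv t ht).le
    exact hconv t h1 h2
  · intro x y hx hy hnorm
    apply cmmaster hx hy
    have ha : |x 0| < 1/30 := by
      have := norm_fst_le ((x 0, y 0) : ℝ × ℝ)
      simp only [Real.norm_eq_abs] at this
      exact lt_of_le_of_lt this hnorm
    have hc : |y 0| < 1/30 := by
      have := norm_snd_le ((x 0, y 0) : ℝ × ℝ)
      simp only [Real.norm_eq_abs] at this
      exact lt_of_le_of_lt this hnorm
    simp only [cmV, cmz]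
    exact cmV0small ha hc
end

section
/- The near-identity coordinate transformation T(X, Y) = (X + XY + (3/2)XY², Y + X² + 2Y² + 4Y³) conjugates the vector field F(x, y) = (−x y, −y + x² − 2y²) to its normal form G(X, Y) = (−X³, −Y − 2X²Y) up to fourth order: F(T(X, Y)) − DT(X, Y)·G(X, Y) = O(‖(X, Y)‖⁴) as (X, Y) → (0, 0), where DT denotes the Jacobian matrix of T. -/
open Asymptotics Topology

/-- The near-identity transformation
`T (X, Y) = (X + XY + (3/2)XY², Y + X² + 2Y² + 4Y³)` conjugates the vector field
`F (x, y) = (−xy, −y + x² − 2y²)` to its normal form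
`G (X, Y) = (−X³, −Y − 2X²Y)` up to fourth order:
`F ∘ T − (DT)·G = O(‖(X, Y)‖⁴)` as `(X, Y) → 0`. -/
theorem normal_form_conjugation_fourth_order
    (T F G : ℝ × ℝ → ℝ × ℝ)
    (hT : ∀ p : ℝ × ℝ, T p =
      (p.1 + p.1 * p.2 + (3 / 2) * p.1 * p.2 ^ 2,
       p.2 + p.1 ^ 2 + 2 * p.2 ^ 2 + 4 * p.2 ^ 3))
    (hF : ∀ p : ℝ × ℝ, F p = (-p.1 * p.2, -p.2 + p.1 ^ 2 - 2 * p.2 ^ 2))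
    (hG : ∀ p : ℝ × ℝ, G p = (-p.1 ^ 3, -p.2 - 2 * p.1 ^ 2 * p.2)) :
    (fun p : ℝ × ℝ => F (T p) - fderiv ℝ T p (G p)) =O[𝓝 0] fun p => ‖p‖ ^ 4 := by
  have hTfun : T = fun p : ℝ × ℝ =>
      ((p.1 + p.1 * p.2 + (3 / 2) * p.1 * p.2 ^ 2,
        p.2 + p.1 ^ 2 + 2 * p.2 ^ 2 + 4 * p.2 ^ 3) : ℝ × ℝ) := funext hT
  subst hTfun
  have key : (fun p : ℝ × ℝ => F
      ((fun p : ℝ × ℝ => ((p.1 + p.1 * p.2 + (3 / 2) * p.1 * p.2 ^ 2,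
        p.2 + p.1 ^ 2 + 2 * p.2 ^ 2 + 4 * p.2 ^ 3) : ℝ × ℝ)) p)
      - fderiv ℝ (fun p : ℝ × ℝ => ((p.1 + p.1 * p.2 + (3 / 2) * p.1 * p.2 ^ 2,
        p.2 + p.1 ^ 2 + 2 * p.2 ^ 2 + 4 * p.2 ^ 3) : ℝ × ℝ)) p (G p)) =
      fun p : ℝ × ℝ =>
      ((2 * (p.1 ^ 3 * p.2 ^ 1) + 6 * (p.1 ^ 3 * p.2 ^ 2) + (-(15/2)) * (p.1 ^ 1 * p.2 ^ 3)
          + (-7) * (p.1 ^ 1 * p.2 ^ 4) + (-6) * (p.1 ^ 1 * p.2 ^ 5),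
        4 * (p.1 ^ 2 * p.2 ^ 2) + 11 * (p.1 ^ 2 * p.2 ^ 3) + (9/4) * (p.1 ^ 2 * p.2 ^ 4)
          + (-24) * (p.1 ^ 0 * p.2 ^ 4) + (-32) * (p.1 ^ 0 * p.2 ^ 5)
          + (-32) * (p.1 ^ 0 * p.2 ^ 6)) : ℝ × ℝ) := by
    funext p
    have hfun : (fun p : ℝ × ℝ => ((p.1 + p.1 * p.2 + (3 / 2) * p.1 * p.2 ^ 2,
        p.2 + p.1 ^ 2 + 2 * p.2 ^ 2 + 4 * p.2 ^ 3) : ℝ × ℝ)) =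
        fun q : ℝ × ℝ => ((q.1 + q.1 * q.2 + (3 / 2) * q.1 * (q.2 * q.2),
        q.2 + q.1 * q.1 + 2 * (q.2 * q.2) + 4 * (q.2 * (q.2 * q.2))) : ℝ × ℝ) := by
      funext q
      simp only [Prod.mk.injEq]
      constructor <;> ring
    rw [hfun]
    have hfst : HasFDerivAt (fun q : ℝ × ℝ => q.1) (ContinuousLinearMap.fst ℝ ℝ ℝ) p :=
      hasFDerivAt_fst
    have hsnd : HasFDerivAt (fun q : ℝ × ℝ => q.2) (ContinuousLinearMap.snd ℝ ℝ ℝ) p :=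
      hasFDerivAt_snd
    have h1 := (hfst.add (hfst.mul hsnd)).add ((hfst.const_mul ((3:ℝ)/2)).mul (hsnd.mul hsnd))
    have h2 := ((hsnd.add (hfst.mul hfst)).add ((hsnd.mul hsnd).const_mul (2:ℝ))).add
      ((hsnd.mul (hsnd.mul hsnd)).const_mul (4:ℝ))
    have h := HasFDerivAt.prodMk h1 h2
    have hD : fderiv ℝ (fun q : ℝ × ℝ => ((q.1 + q.1 * q.2 + (3 / 2) * q.1 * (q.2 * q.2),
        q.2 + q.1 * q.1 + 2 * (q.2 * q.2) + 4 * (q.2 * (q.2 * q.2))) : ℝ × ℝ)) p = _ := h.fderiv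
    rw [hD, hF, hG]
    simp only [ContinuousLinearMap.prod_apply, ContinuousLinearMap.add_apply,
      ContinuousLinearMap.smul_apply, ContinuousLinearMap.coe_fst', ContinuousLinearMap.coe_snd',
      smul_eq_mul, Prod.mk_sub_mk, Prod.mk.injEq, Pi.mul_apply]
    constructor <;> ring
  rw [key]
  have hx : (fun p : ℝ × ℝ => p.1) =O[𝓝 (0 : ℝ × ℝ)] fun p => ‖p‖ :=
    isBigO_of_le _ fun p => by simpa using norm_fst_le p
  have hy : (fun p : ℝ × ℝ => p.2) =O[𝓝 (0 : ℝ × ℝ)] fun p => ‖p‖ :=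
    isBigO_of_le _ fun p => by simpa using norm_snd_le p
  have h4 : ∀ k : ℕ, 4 ≤ k → (fun p : ℝ × ℝ => ‖p‖ ^ k) =O[𝓝 (0 : ℝ × ℝ)] fun p => ‖p‖ ^ 4 := by
    intro k hk
    rw [isBigO_iff]
    refine ⟨1, ?_⟩
    filter_upwards [Metric.ball_mem_nhds (0 : ℝ × ℝ) one_pos] with p hp
    rw [Metric.mem_ball, dist_zero_right] at hp
    rw [one_mul, Real.norm_of_nonneg (by positivity), Real.norm_of_nonneg (by positivity)]
    exact pow_le_pow_of_le_one (norm_nonneg p) hp.le hk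
  have mono : ∀ i j : ℕ, 4 ≤ i + j →
      (fun p : ℝ × ℝ => p.1 ^ i * p.2 ^ j) =O[𝓝 (0 : ℝ × ℝ)] fun p => ‖p‖ ^ 4 := by
    intro i j hij
    refine ((hx.pow i).mul (hy.pow j)).trans ?_
    simpa [pow_add] using h4 (i + j) hij
  exact IsBigO.prod_left
    (((((((mono 3 1 (by norm_num)).const_mul_left 2).add
      ((mono 3 2 (by norm_num)).const_mul_left 6)).add
      ((mono 1 3 (by norm_num)).const_mul_left (-(15/2)))).add
      ((mono 1 4 (by norm_num)).const_mul_left (-7))).add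
      ((mono 1 5 (by norm_num)).const_mul_left (-6))))
    ((((((mono 2 2 (by norm_num)).const_mul_left 4).add
      ((mono 2 3 (by norm_num)).const_mul_left 11)).add
      ((mono 2 4 (by norm_num)).const_mul_left (9/4))).add
      ((mono 0 4 (by norm_num)).const_mul_left (-24))).add
      ((mono 0 5 (by norm_num)).const_mul_left (-32)) |>.add
      ((mono 0 6 (by norm_num)).const_mul_left (-32)))
end
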